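/- Let (a,b,c) ∈ ℝ³ with a ≥ 0. Then the causal diamond satisfies J((0,0,0),(a,b,c)) ⊆ [−a,a] × [−a,a] × [−a²,a²]. Moreover, every horizontal Lipschitz curve γ : [0,1] → ℝ³ with γ(0) = (0,0,0) and γ(1) = (a,b,c) has sub-Riemannian length at least √(a² + b²); consequently J((0,0,0),(a,b,c)) ⊆ [−d,d] × [−d,d] × [−d²,d²] where d = d((0,0,0),(a,b,c)) is the sub-Riemannian distance. -/

import Mathlib

open MeasureTheory Set Filter intervalIntegral Topology NNReal

/-- FTC for globally Lipschitz real functions. -/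
lemma lipschitz_integral_deriv_eq {f : ℝ → ℝ} {K : ℝ≥0} (hf : LipschitzWith K f)
    {a b : ℝ} (hab : a ≤ b) : ∫ t in a..b, deriv f t = f b - f a := by
  have hcont : Continuous f := hf.continuous
  have hbound : ∀ x, |deriv f x| ≤ K := fun x => by
    simpa [Real.norm_eq_abs] using norm_deriv_le_of_lipschitz (𝕜 := ℝ) hf (x₀ := x)
  have hmeas : Measurable (deriv f) := measurable_deriv f
  -- integrability of deriv f on Ioc a b
  have hint : IntegrableOn (deriv f) (Ioc a b) volume := by
    refine Measure.integrableOn_of_bounded (M := (K:ℝ)) measure_Ioc_lt_top.ne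
      hmeas.aestronglyMeasurable ?_
    exact Eventually.of_forall fun x => by simpa [Real.norm_eq_abs] using hbound x
  set u : ℕ → ℝ := fun n => ((n : ℝ) + 1)⁻¹ with hu
  have hupos : ∀ n, 0 < u n := fun n => by positivity
  have hulim : Tendsto u atTop (𝓝 0) := by
    simpa [hu, one_div] using tendsto_one_div_add_atTop_nhds_zero_nat (𝕜 := ℝ)
  have hulim' : ∀ t : ℝ, Tendsto (fun n => t + u n) atTop (𝓝[≠] t) := by
    intro t
    apply tendsto_nhdsWithin_of_tendsto_nhds_of_eventually_within
    · simpa using tendsto_const_nhds.add hulim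
    · exact Eventually.of_forall fun n => by
        simp [mem_compl_iff, (hupos n).ne']
  set g : ℕ → ℝ → ℝ := fun n t => (f (t + u n) - f t) / u n with hg
  -- a.e. convergence of difference quotients
  have hae : ∀ᵐ t : ℝ, Tendsto (fun n => g n t) atTop (𝓝 (deriv f t)) := by
    filter_upwards [hf.ae_differentiableAt_of_real] with t ht
    have h1 := ht.hasDerivAt
    rw [hasDerivAt_iff_tendsto_slope] at h1
    have h2 := h1.comp (hulim' t)
    refine h2.congr fun n => ?_
    simp only [Function.comp_apply, slope_def_field]
    rw [hg]
    simp only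
    congr 1
    ring
  -- the slope integrals converge to f b - f a
  have hFc : ∀ c : ℝ, Tendsto (fun n => (∫ x in c..(c + u n), f x) / u n) atTop (𝓝 (f c)) := by
    intro c
    have hI : ∀ d e : ℝ, IntervalIntegrable f volume d e := fun d e =>
      hcont.intervalIntegrable d e
    have hd : HasDerivAt (fun x => ∫ s in c..x, f s) (f c) c :=
      integral_hasDerivAt_right (hI c c) (hcont.stronglyMeasurableAtFilter _ _)
        hcont.continuousAt
    rw [hasDerivAt_iff_tendsto_slope] at hd
    have h2 := hd.comp (hulim' c)
    refine h2.congr fun n => ?_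
    simp only [Function.comp_apply, slope_def_field, integral_same]
    ring
  have hI : ∀ d e : ℝ, IntervalIntegrable f volume d e := fun d e =>
    hcont.intervalIntegrable d e
  have hIg : ∀ n, ∫ t in a..b, g n t =
      (∫ x in b..(b + u n), f x) / u n - (∫ x in a..(a + u n), f x) / u n := by
    intro n
    have hcomp : Continuous fun t : ℝ => f (t + u n) :=
      hcont.comp (continuous_id.add continuous_const)
    have h2 : ∫ t in a..b, g n t =
        ((∫ t in a..b, f (t + u n)) - ∫ t in a..b, f t) / u n := by
      rw [hg]
      simp only
      rw [intervalIntegral.integral_div, intervalIntegral.integral_sub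
        (hcomp.intervalIntegrable a b) (hI a b)]
    rw [h2, integral_comp_add_right (a := a) (b := b) f (u n)]
    have e1 : (∫ x in (a + u n)..b, f x) + ∫ x in b..(b + u n), f x
        = ∫ x in (a + u n)..(b + u n), f x :=
      integral_add_adjacent_intervals (hI _ _) (hI _ _)
    have e2 : (∫ x in a..(a + u n), f x) + ∫ x in (a + u n)..b, f x
        = ∫ x in a..b, f x :=
      integral_add_adjacent_intervals (hI _ _) (hI _ _)
    rw [div_sub_div_same]
    congr 1
    linarith
  have hDC : Tendsto (fun n => ∫ t in Ioc a b, g n t) atTop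
      (𝓝 (∫ t in Ioc a b, deriv f t)) := by
    refine MeasureTheory.tendsto_integral_of_dominated_convergence (fun _ => (K : ℝ))
      (fun n => ?_) ?_ (fun n => ?_) ?_
    · exact ((hcont.comp (continuous_id.add continuous_const)).sub hcont).div_const
        (u n) |>.aestronglyMeasurable.restrict
    · exact (integrableOn_const measure_Ioc_lt_top.ne)
    · refine Eventually.of_forall fun t => ?_
      rw [hg]
      simp only [Real.norm_eq_abs, abs_div, abs_of_pos (hupos n)]
      rw [div_le_iff₀ (hupos n)]
      calc |f (t + u n) - f t| ≤ K * |(t + u n) - t| := by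
            simpa [Real.dist_eq] using hf.dist_le_mul (t + u n) t
        _ = K * u n := by rw [show (t + u n) - t = u n by ring, abs_of_pos (hupos n)]
    · exact ae_restrict_of_ae hae
  have hDC2 : Tendsto (fun n => ∫ t in a..b, g n t) atTop (𝓝 (f b - f a)) := by
    have := (hFc b).sub (hFc a)
    refine this.congr fun n => ?_
    rw [hIg n]
  rw [integral_of_le hab]
  refine tendsto_nhds_unique ?_ hDC2
  refine hDC.congr fun n => ?_
  rw [integral_of_le hab]

lemma lipOn_deriv_bound {f : ℝ → ℝ} {K : ℝ≥0} (hf : LipschitzOnWith K f (Icc 0 1))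
    {t : ℝ} (ht : t ∈ Ioo (0:ℝ) 1) : |deriv f t| ≤ K := by
  simpa [Real.norm_eq_abs] using
    norm_deriv_le_of_lipschitzOn (𝕜 := ℝ) (Icc_mem_nhds ht.1 ht.2) hf

lemma ae_ne_one : ∀ᵐ x : ℝ, x ≠ (1:ℝ) := by
  refine (MeasureTheory.ae_iff).2 ?_
  simpa using measure_singleton (1:ℝ)

lemma lipOn_ftc {f : ℝ → ℝ} {K : ℝ≥0} (hf : LipschitzOnWith K f (Icc 0 1))
    {s t : ℝ} (hs : 0 ≤ s) (hst : s ≤ t) (ht : t ≤ 1) :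
    ∫ u in s..t, deriv f u = f t - f s := by
  obtain ⟨g, hg, hfg⟩ := hf.extend_real
  have hderiv : ∀ u ∈ Ioo (0:ℝ) 1, deriv f u = deriv g u := by
    intro u hu
    apply Filter.EventuallyEq.deriv_eq
    filter_upwards [Icc_mem_nhds hu.1 hu.2] with x hx using hfg hx
  have heq : ∫ u in s..t, deriv f u = ∫ u in s..t, deriv g u := by
    apply intervalIntegral.integral_congr_ae
    filter_upwards [ae_ne_one] with x hx1 hx
    rw [uIoc_of_le hst] at hx
    exact hderiv x ⟨lt_of_le_of_lt hs hx.1, lt_of_le_of_ne (hx.2.trans ht) hx1⟩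
  rw [heq, lipschitz_integral_deriv_eq hg hst,
    ← hfg ⟨hs.trans hst, ht⟩, ← hfg ⟨hs, hst.trans ht⟩]

lemma lipOn_deriv_intInt {f : ℝ → ℝ} {K : ℝ≥0} (hf : LipschitzOnWith K f (Icc 0 1))
    {s t : ℝ} (hs : 0 ≤ s) (hst : s ≤ t) (ht : t ≤ 1) :
    IntervalIntegrable (deriv f) volume s t := by
  rw [intervalIntegrable_iff_integrableOn_Ioc_of_le hst]
  refine Measure.integrableOn_of_bounded (M := (K : ℝ)) measure_Ioc_lt_top.ne
    (measurable_deriv f).aestronglyMeasurable ?_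
  filter_upwards [ae_restrict_mem measurableSet_Ioc, ae_restrict_of_ae ae_ne_one] with x hx hx1
  exact (Real.norm_eq_abs _) ▸ lipOn_deriv_bound hf
    ⟨lt_of_le_of_lt hs hx.1, lt_of_le_of_ne (hx.2.trans ht) hx1⟩

/-- `γ` is Lipschitz on `[0,1]`. -/
def IsLipCurve3 (γ : ℝ → ℝ × ℝ × ℝ) : Prop :=
  ∃ K, LipschitzOnWith K γ (Icc (0:ℝ) 1)

/-- A curve in the Heisenberg group is horizontal if, for almost every `t ∈ [0,1]`,
`γ₃'(t) = (γ₁(t)γ₂'(t) − γ₁'(t)γ₂(t))/2`. -/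
def Horizontal (γ : ℝ → ℝ × ℝ × ℝ) : Prop :=
  ∀ᵐ t ∂(volume.restrict (Icc (0:ℝ) 1)),
    deriv (fun s => (γ s).2.2) t =
      ((γ t).1 * deriv (fun s => (γ s).2.1) t -
        deriv (fun s => (γ s).1) t * (γ t).2.1) / 2

/-- A horizontal curve is future-directed causal if, for almost every `t ∈ [0,1]`,
`γ₁'(t) ≥ |γ₂'(t)|` and `γ₁'(t) > 0`. -/
def IsFDCausal3 (γ : ℝ → ℝ × ℝ × ℝ) : Prop :=
  ∀ᵐ t ∂(volume.restrict (Icc (0:ℝ) 1)),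
    |deriv (fun s => (γ s).2.1) t| ≤ deriv (fun s => (γ s).1) t ∧
      0 < deriv (fun s => (γ s).1) t

/-- A horizontal curve is future-directed timelike if, for almost every `t ∈ [0,1]`,
`γ₁'(t) > |γ₂'(t)|`. -/
def IsFDTimelike3 (γ : ℝ → ℝ × ℝ × ℝ) : Prop :=
  ∀ᵐ t ∂(volume.restrict (Icc (0:ℝ) 1)),
    |deriv (fun s => (γ s).2.1) t| < deriv (fun s => (γ s).1) t

/-- The Lorentzian length of a (causal) curve. -/
noncomputable def lorLength3 (γ : ℝ → ℝ × ℝ × ℝ) : ℝ :=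
  ∫ t in (0:ℝ)..1,
    Real.sqrt ((deriv (fun s => (γ s).1) t)^2 - (deriv (fun s => (γ s).2.1) t)^2)

/-- The sub-Riemannian length of a horizontal curve. -/
noncomputable def sRLength3 (γ : ℝ → ℝ × ℝ × ℝ) : ℝ :=
  ∫ t in (0:ℝ)..1,
    Real.sqrt ((deriv (fun s => (γ s).1) t)^2 + (deriv (fun s => (γ s).2.1) t)^2)

/-- Admissible (horizontal future-directed causal Lipschitz) curves from `p` to `q`. -/
def AdmCurve (p q : ℝ × ℝ × ℝ) (γ : ℝ → ℝ × ℝ × ℝ) : Prop :=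
  IsLipCurve3 γ ∧ Horizontal γ ∧ IsFDCausal3 γ ∧ γ 0 = p ∧ γ 1 = q

/-- Causal precedence: `p ≤ q`. -/
def CausalLE (p q : ℝ × ℝ × ℝ) : Prop :=
  p = q ∨ ∃ γ, AdmCurve p q γ

/-- The causal diamond `J(p,q)`. -/
def causalDiamond (p q : ℝ × ℝ × ℝ) : Set (ℝ × ℝ × ℝ) :=
  {r | CausalLE p r ∧ CausalLE r q}

/-- The time separation function `τ` (equal to `0`, by convention on real `sSup`,
if there is no admissible curve). -/
noncomputable def timeSep (p q : ℝ × ℝ × ℝ) : ℝ :=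
  sSup (lorLength3 '' {γ | AdmCurve p q γ})

/-- The sub-Riemannian distance. -/
noncomputable def sRDist (p q : ℝ × ℝ × ℝ) : ℝ :=
  sInf (sRLength3 '' {γ | IsLipCurve3 γ ∧ Horizontal γ ∧ γ 0 = p ∧ γ 1 = q})

/-- The anisotropic box `[-r,r] × [-r,r] × [-r²,r²]`. -/
def heisBox (r : ℝ) : Set (ℝ × ℝ × ℝ) :=
  Icc (-r) r ×ˢ Icc (-r) r ×ˢ Icc (-(r^2)) (r^2)

lemma IsLipCurve3.comps {γ : ℝ → ℝ × ℝ × ℝ} (h : IsLipCurve3 γ) :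
    ∃ K : ℝ≥0, LipschitzOnWith K (fun s => (γ s).1) (Icc 0 1) ∧
      LipschitzOnWith K (fun s => (γ s).2.1) (Icc 0 1) ∧
      LipschitzOnWith K (fun s => (γ s).2.2) (Icc 0 1) := by
  obtain ⟨K, hK⟩ := h
  refine ⟨K, ?_, ?_, ?_⟩
  · simpa [Function.comp_def] using LipschitzWith.prod_fst.comp_lipschitzOnWith hK
  · simpa [Function.comp_def] using
      (LipschitzWith.prod_fst.comp LipschitzWith.prod_snd).comp_lipschitzOnWith hK
  · simpa [Function.comp_def] using
      (LipschitzWith.prod_snd.comp LipschitzWith.prod_snd).comp_lipschitzOnWith hK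

lemma causal_first_mono {γ : ℝ → ℝ × ℝ × ℝ} (hlip : IsLipCurve3 γ)
    (hcaus : IsFDCausal3 γ) : (γ 0).1 ≤ (γ 1).1 := by
  obtain ⟨K, hf, -, -⟩ := hlip.comps
  have hftc := lipOn_ftc hf le_rfl zero_le_one le_rfl
  have hnn : 0 ≤ ∫ u in (0:ℝ)..1, deriv (fun s => (γ s).1) u := by
    refine intervalIntegral.integral_nonneg_of_ae_restrict zero_le_one ?_
    filter_upwards [hcaus] with t ht using ht.2.le
  linarith

lemma causal_bounds {γ : ℝ → ℝ × ℝ × ℝ} (hlip : IsLipCurve3 γ) (hhor : Horizontal γ)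
    (hcaus : IsFDCausal3 γ) (h0 : γ 0 = (0, 0, 0)) :
    0 ≤ (γ 1).1 ∧ |(γ 1).2.1| ≤ (γ 1).1 ∧ |(γ 1).2.2| ≤ (γ 1).1 ^ 2 := by
  obtain ⟨K, hf, hg, hh⟩ := hlip.comps
  set f : ℝ → ℝ := fun s => (γ s).1 with hfdef
  set g : ℝ → ℝ := fun s => (γ s).2.1 with hgdef
  set h : ℝ → ℝ := fun s => (γ s).2.2 with hhdef
  have hf0 : f 0 = 0 := by rw [hfdef]; simp [h0]
  have hg0 : g 0 = 0 := by rw [hgdef]; simp [h0]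
  have hh0 : h 0 = 0 := by rw [hhdef]; simp [h0]
  -- restriction of the causal condition to subintervals
  have hsub : ∀ ⦃s t : ℝ⦄, 0 ≤ s → t ≤ 1 →
      ∀ᵐ u ∂(volume.restrict (Icc s t)), |deriv g u| ≤ deriv f u ∧ 0 < deriv f u :=
    fun s t hs ht => hcaus.filter_mono
      (ae_mono (Measure.restrict_mono (Icc_subset_Icc hs ht) le_rfl))
  -- pointwise facts
  have P1 : ∀ t ∈ Icc (0:ℝ) 1, 0 ≤ f t := by
    rintro t ⟨ht0, ht1⟩
    have hftc := lipOn_ftc hf le_rfl ht0 ht1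
    have hnn : 0 ≤ ∫ u in (0:ℝ)..t, deriv f u :=
      intervalIntegral.integral_nonneg_of_ae_restrict ht0
        ((hsub le_rfl ht1).mono fun u hu => hu.2.le)
    linarith
  have P3 : ∀ t ∈ Icc (0:ℝ) 1, f t ≤ f 1 := by
    rintro t ⟨ht0, ht1⟩
    have hftc := lipOn_ftc hf ht0 ht1 le_rfl
    have hnn : 0 ≤ ∫ u in t..1, deriv f u :=
      intervalIntegral.integral_nonneg_of_ae_restrict ht1
        ((hsub ht0 le_rfl).mono fun u hu => hu.2.le)
    linarith
  have P2 : ∀ t ∈ Icc (0:ℝ) 1, |g t| ≤ f t := by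
    rintro t ⟨ht0, ht1⟩
    have hgtc := lipOn_ftc hg le_rfl ht0 ht1
    have hftc := lipOn_ftc hf le_rfl ht0 ht1
    have h1 : |∫ u in (0:ℝ)..t, deriv g u| ≤ ∫ u in (0:ℝ)..t, |deriv g u| :=
      intervalIntegral.abs_integral_le_integral_abs ht0
    have h2 : ∫ u in (0:ℝ)..t, |deriv g u| ≤ ∫ u in (0:ℝ)..t, deriv f u := by
      refine intervalIntegral.integral_mono_ae_restrict ht0
        (lipOn_deriv_intInt hg le_rfl ht0 ht1).abs
        (lipOn_deriv_intInt hf le_rfl ht0 ht1) ?_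
      exact (hsub le_rfl ht1).mono fun u hu => hu.1
    calc |g t| = |∫ u in (0:ℝ)..t, deriv g u| := by rw [hgtc, hg0, sub_zero]
      _ ≤ ∫ u in (0:ℝ)..t, deriv f u := h1.trans h2
      _ = f t := by rw [hftc, hf0, sub_zero]
  refine ⟨P1 1 (by norm_num), P2 1 (by norm_num), ?_⟩
  -- the third-coordinate bound
  have hbd : ∀ᵐ t ∂(volume.restrict (Icc (0:ℝ) 1)), |deriv h t| ≤ f 1 * deriv f t := by
    filter_upwards [hhor, hcaus, ae_restrict_mem measurableSet_Icc] with t hH hC htmem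
    rw [hH]
    have h1 := P1 t htmem
    have h2 := P2 t htmem
    have h3 := P3 t htmem
    obtain ⟨hdg1, hdg2⟩ := abs_le.1 hC.1
    obtain ⟨hg1, hg2⟩ := abs_le.1 h2
    have hdfpos := hC.2
    rw [abs_le]
    constructor
    · rw [le_div_iff₀ (by norm_num : (0:ℝ) < 2)]
      nlinarith [mul_nonneg h1 (sub_nonneg.2 hdg1), mul_nonneg h1 (sub_nonneg.2 hdg2),
        mul_nonneg (sub_nonneg.2 h3) hdfpos.le, mul_le_mul_of_nonneg_right h3 hdfpos.le]
    · rw [div_le_iff₀ (by norm_num : (0:ℝ) < 2)]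
      nlinarith [mul_nonneg h1 (sub_nonneg.2 hdg1), mul_nonneg h1 (sub_nonneg.2 hdg2),
        mul_nonneg (sub_nonneg.2 h3) hdfpos.le, mul_le_mul_of_nonneg_right h3 hdfpos.le]
  have hhtc := lipOn_ftc hh le_rfl zero_le_one le_rfl
  have hftc := lipOn_ftc hf le_rfl zero_le_one le_rfl
  have h1 : |∫ u in (0:ℝ)..1, deriv h u| ≤ ∫ u in (0:ℝ)..1, |deriv h u| :=
    intervalIntegral.abs_integral_le_integral_abs zero_le_one
  have h2 : ∫ u in (0:ℝ)..1, |deriv h u| ≤ ∫ u in (0:ℝ)..1, f 1 * deriv f u := by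
    refine intervalIntegral.integral_mono_ae_restrict zero_le_one
      (lipOn_deriv_intInt hh le_rfl zero_le_one le_rfl).abs
      ((lipOn_deriv_intInt hf le_rfl zero_le_one le_rfl).const_mul _) hbd
  have h3 : ∫ u in (0:ℝ)..1, f 1 * deriv f u = f 1 ^ 2 := by
    rw [intervalIntegral.integral_const_mul, hftc, hf0, sub_zero, sq]
  calc |h 1| = |∫ u in (0:ℝ)..1, deriv h u| := by rw [hhtc, hh0, sub_zero]
    _ ≤ f 1 ^ 2 := by rw [← h3]; exact h1.trans h2

lemma cauchy_schwarz2 (a b x y : ℝ) :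
    a * x + b * y ≤ Real.sqrt (a^2 + b^2) * Real.sqrt (x^2 + y^2) :=
  calc a * x + b * y ≤ |a * x + b * y| := le_abs_self _
    _ = Real.sqrt ((a * x + b * y)^2) := (Real.sqrt_sq_eq_abs _).symm
    _ ≤ Real.sqrt ((a^2 + b^2) * (x^2 + y^2)) :=
        Real.sqrt_le_sqrt (by nlinarith [sq_nonneg (a * y - b * x)])
    _ = _ := Real.sqrt_mul (by positivity) _

lemma length_lower {γ : ℝ → ℝ × ℝ × ℝ} {a b c : ℝ} (hlip : IsLipCurve3 γ)
    (h0 : γ 0 = (0, 0, 0)) (h1 : γ 1 = (a, b, c)) :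
    Real.sqrt (a^2 + b^2) ≤ sRLength3 γ := by
  obtain ⟨K, hf, hg, -⟩ := hlip.comps
  set df : ℝ → ℝ := deriv (fun s => (γ s).1) with hdf
  set dg : ℝ → ℝ := deriv (fun s => (γ s).2.1) with hdg
  have hfa : ∫ u in (0:ℝ)..1, df u = a := by
    have := lipOn_ftc hf le_rfl zero_le_one le_rfl
    simpa [h0, h1] using this
  have hgb : ∫ u in (0:ℝ)..1, dg u = b := by
    have := lipOn_ftc hg le_rfl zero_le_one le_rfl
    simpa [h0, h1] using this
  have hintf := lipOn_deriv_intInt hf le_rfl zero_le_one le_rfl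
  have hintg := lipOn_deriv_intInt hg le_rfl zero_le_one le_rfl
  set L := sRLength3 γ with hL
  have hLnn : 0 ≤ L :=
    intervalIntegral.integral_nonneg zero_le_one fun u _ => Real.sqrt_nonneg _
  have hintS : IntervalIntegrable (fun u => Real.sqrt (df u ^ 2 + dg u ^ 2)) volume 0 1 := by
    rw [intervalIntegrable_iff_integrableOn_Ioc_of_le zero_le_one]
    refine Measure.integrableOn_of_bounded (M := Real.sqrt ((K:ℝ)^2 + (K:ℝ)^2))
      measure_Ioc_lt_top.ne ?_ ?_
    · exact ((((measurable_deriv _).pow_const 2).add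
        ((measurable_deriv _).pow_const 2)).sqrt).aestronglyMeasurable
    · filter_upwards [ae_restrict_mem measurableSet_Ioc, ae_restrict_of_ae ae_ne_one]
        with x hx hx1
      have hx' : x ∈ Ioo (0:ℝ) 1 := ⟨hx.1, lt_of_le_of_ne hx.2 hx1⟩
      have h1 := lipOn_deriv_bound hf hx'
      have h2 := lipOn_deriv_bound hg hx'
      rw [Real.norm_eq_abs, abs_of_nonneg (Real.sqrt_nonneg _)]
      refine Real.sqrt_le_sqrt ?_
      have e1 : df x ^ 2 ≤ (K:ℝ)^2 := by rw [← sq_abs]; exact pow_le_pow_left₀ (abs_nonneg _) h1 2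
      have e2 : dg x ^ 2 ≤ (K:ℝ)^2 := by rw [← sq_abs]; exact pow_le_pow_left₀ (abs_nonneg _) h2 2
      linarith
  have key : a^2 + b^2 ≤ Real.sqrt (a^2 + b^2) * L := by
    have hlin : ∫ u in (0:ℝ)..1, (a * df u + b * dg u) = a^2 + b^2 := by
      rw [intervalIntegral.integral_add (hintf.const_mul a) (hintg.const_mul b),
        intervalIntegral.integral_const_mul, intervalIntegral.integral_const_mul, hfa, hgb]
      ring
    have hmono : ∫ u in (0:ℝ)..1, (a * df u + b * dg u) ≤
        ∫ u in (0:ℝ)..1, Real.sqrt (a^2 + b^2) * Real.sqrt (df u ^ 2 + dg u ^ 2) := by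
      refine intervalIntegral.integral_mono_on zero_le_one
        ((hintf.const_mul a).add (hintg.const_mul b)) (hintS.const_mul _) ?_
      exact fun u _ => cauchy_schwarz2 a b (df u) (dg u)
    rw [hlin, intervalIntegral.integral_const_mul] at hmono
    exact hmono
  rcases eq_or_lt_of_le (show (0:ℝ) ≤ a^2 + b^2 by positivity) with h | h
  · rw [← h]; simpa using hLnn
  · have hs := Real.sqrt_pos.2 h
    have h2 : Real.sqrt (a^2 + b^2) * Real.sqrt (a^2 + b^2) ≤ Real.sqrt (a^2 + b^2) * L := by
      rw [Real.mul_self_sqrt h.le]; exact key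
    exact le_of_mul_le_mul_left h2 hs

lemma lipOn_of_C1 {f f' : ℝ → ℝ} (hd : ∀ x, HasDerivAt f (f' x) x) (hc : Continuous f') :
    ∃ K : ℝ≥0, LipschitzOnWith K f (Icc (0:ℝ) 1) := by
  obtain ⟨C, hC⟩ := isCompact_Icc.exists_bound_of_continuousOn
    (hc.continuousOn : ContinuousOn f' (Icc (0:ℝ) 1))
  refine ⟨⟨max C 0, le_max_right _ _⟩, Convex.lipschitzOnWith_of_nnnorm_deriv_le
    (fun x _ => (hd x).differentiableAt) (fun x hx => ?_) (convex_Icc _ _)⟩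
  change (‖deriv f x‖₊ : ℝ) ≤ max C 0
  have : deriv f x = f' x := (hd x).deriv
  simp only [coe_nnnorm, NNReal.coe_mk, this]
  exact (hC x hx).trans (le_max_left _ _)

lemma exists_curve (a b c : ℝ) :
    ∃ γ : ℝ → ℝ × ℝ × ℝ, IsLipCurve3 γ ∧ Horizontal γ ∧
      γ 0 = (0, 0, 0) ∧ γ 1 = (a, b, c) := by
  have hx : ∀ t : ℝ, HasDerivAt (fun t : ℝ => a*t + t - t^2) (a + 1 - 2*t) t := by
    intro t
    have h := (((hasDerivAt_id t).const_mul a).add (hasDerivAt_id t)).sub (hasDerivAt_pow 2 t)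
    refine h.congr_deriv ?_
    push_cast
    ring
  have hy : ∀ t : ℝ, HasDerivAt (fun t : ℝ => b*t + (5*b-30*c)*(t - 3*t^2 + 2*t^3))
      (b + (5*b-30*c)*(1 - 6*t + 6*t^2)) t := by
    intro t
    have hin : HasDerivAt (fun t : ℝ => t - 3*t^2 + 2*t^3) (1 - 6*t + 6*t^2) t := by
      have h := ((hasDerivAt_id t).sub ((hasDerivAt_pow 2 t).const_mul 3)).add
        ((hasDerivAt_pow 3 t).const_mul 2)
      refine h.congr_deriv ?_
      push_cast
      ring
    have h := ((hasDerivAt_id t).const_mul b).add (hin.const_mul (5*b-30*c))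
    refine h.congr_deriv ?_
    ring
  have hz : ∀ t : ℝ, HasDerivAt (fun t : ℝ =>
      (b/6 - (5*b-30*c)/3 - a*(5*b-30*c)/2)*t^3 + ((5*b-30*c)/2 + a*(5*b-30*c)/2)*t^4
        - ((5*b-30*c)/5)*t^5)
      ((b/2 - (5*b-30*c) - 3*a*(5*b-30*c)/2)*t^2 + (2*(5*b-30*c) + 2*a*(5*b-30*c))*t^3
        - (5*b-30*c)*t^4) t := by
    intro t
    have h := (((hasDerivAt_pow 3 t).const_mul (b/6 - (5*b-30*c)/3 - a*(5*b-30*c)/2)).add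
      ((hasDerivAt_pow 4 t).const_mul ((5*b-30*c)/2 + a*(5*b-30*c)/2))).sub
      ((hasDerivAt_pow 5 t).const_mul ((5*b-30*c)/5))
    refine h.congr_deriv ?_
    push_cast
    ring
  refine ⟨fun t => (a*t + t - t^2, b*t + (5*b-30*c)*(t - 3*t^2 + 2*t^3),
    (b/6 - (5*b-30*c)/3 - a*(5*b-30*c)/2)*t^3 + ((5*b-30*c)/2 + a*(5*b-30*c)/2)*t^4
      - ((5*b-30*c)/5)*t^5), ?_, ?_, ?_, ?_⟩
  · obtain ⟨K1, h1⟩ := lipOn_of_C1 hx (by fun_prop)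
    obtain ⟨K2, h2⟩ := lipOn_of_C1 hy (by fun_prop)
    obtain ⟨K3, h3⟩ := lipOn_of_C1 hz (by fun_prop)
    exact ⟨max K1 (max K2 K3), h1.prodMk (h2.prodMk h3)⟩
  · refine Eventually.of_forall fun t => ?_
    show deriv (fun t : ℝ =>
        (b/6 - (5*b-30*c)/3 - a*(5*b-30*c)/2)*t^3 + ((5*b-30*c)/2 + a*(5*b-30*c)/2)*t^4
          - ((5*b-30*c)/5)*t^5) t =
      ((a*t + t - t^2) * deriv (fun t : ℝ => b*t + (5*b-30*c)*(t - 3*t^2 + 2*t^3)) t -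
        deriv (fun t : ℝ => a*t + t - t^2) t * (b*t + (5*b-30*c)*(t - 3*t^2 + 2*t^3))) / 2
    rw [(hz t).deriv, (hy t).deriv, (hx t).deriv]
    ring
  · norm_num
  · norm_num [Prod.ext_iff]
    ring

/-- for `a ≥ 0`, the causal diamond `J(0,(a,b,c))` is contained in
the box `[−a,a] × [−a,a] × [−a²,a²]`; every horizontal Lipschitz curve from the
origin to `(a,b,c)` has sub-Riemannian length at least `√(a² + b²)`; consequently
`J(0,(a,b,c))` is contained in the box of size `d = d(0,(a,b,c))`. -/
theorem diamond_subset_box (a b c : ℝ) (ha : 0 ≤ a) :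
    causalDiamond (0, 0, 0) (a, b, c) ⊆ heisBox a ∧
    (∀ γ : ℝ → ℝ × ℝ × ℝ, IsLipCurve3 γ → Horizontal γ →
      γ 0 = (0, 0, 0) → γ 1 = (a, b, c) →
      Real.sqrt (a^2 + b^2) ≤ sRLength3 γ) ∧
    causalDiamond (0, 0, 0) (a, b, c) ⊆ heisBox (sRDist (0, 0, 0) (a, b, c)) := by
  have part2 : ∀ γ : ℝ → ℝ × ℝ × ℝ, IsLipCurve3 γ → Horizontal γ →
      γ 0 = (0, 0, 0) → γ 1 = (a, b, c) → Real.sqrt (a^2 + b^2) ≤ sRLength3 γ :=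
    fun γ hl hh h0 h1 => length_lower hl h0 h1
  have part1 : causalDiamond (0, 0, 0) (a, b, c) ⊆ heisBox a := by
    rintro ⟨x, y, z⟩ ⟨h0r, hrq⟩
    have hxa : x ≤ a := by
      rcases hrq with h | ⟨δ, hδl, hδh, hδc, hδ0, hδ1⟩
      · rw [Prod.mk.injEq, Prod.mk.injEq] at h
        exact h.1.le
      · have := causal_first_mono hδl hδc
        rw [hδ0, hδ1] at this
        simpa using this
    simp only [heisBox, mem_prod, mem_Icc]
    rcases h0r with h | ⟨γ, hγl, hγh, hγc, hγ0, hγ1⟩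
    · rw [Prod.mk.injEq, Prod.mk.injEq] at h
      obtain ⟨h1, h2, h3⟩ := h
      subst h1; subst h2; subst h3
      refine ⟨⟨by linarith, ha⟩, ⟨by linarith, ha⟩, by nlinarith [sq_nonneg a], by positivity⟩
    · have hb := causal_bounds hγl hγh hγc hγ0
      rw [hγ1] at hb
      simp only at hb
      obtain ⟨h1, h2, h3⟩ := hb
      obtain ⟨hy1, hy2⟩ := abs_le.1 h2
      obtain ⟨hz1, hz2⟩ := abs_le.1 h3
      have hx2 : x ^ 2 ≤ a ^ 2 := pow_le_pow_left₀ h1 hxa 2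
      exact ⟨⟨by linarith, hxa⟩, ⟨by linarith, by linarith⟩, by linarith, by linarith⟩
  have hd : a ≤ sRDist (0, 0, 0) (a, b, c) := by
    have hne : (sRLength3 '' {γ | IsLipCurve3 γ ∧ Horizontal γ ∧
        γ 0 = ((0:ℝ), (0:ℝ), (0:ℝ)) ∧ γ 1 = (a, b, c)}).Nonempty := by
      obtain ⟨γ, h1, h2, h3, h4⟩ := exists_curve a b c
      exact ⟨_, ⟨γ, ⟨h1, h2, h3, h4⟩, rfl⟩⟩
    refine le_csInf hne ?_
    rintro L ⟨γ, ⟨hl, hh, h0, h1⟩, rfl⟩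
    have hlen := part2 γ hl hh h0 h1
    have ha2 : a ≤ Real.sqrt (a^2 + b^2) := by
      have e : a = Real.sqrt (a^2) := (Real.sqrt_sq ha).symm
      rw [e]
      exact Real.sqrt_le_sqrt (by nlinarith)
    linarith
  refine ⟨part1, part2, fun r hr => ?_⟩
  have hbox := part1 hr
  obtain ⟨x, y, z⟩ := r
  have hd2 : a ^ 2 ≤ sRDist (0, 0, 0) (a, b, c) ^ 2 := pow_le_pow_left₀ ha hd 2
  simp only [heisBox, mem_prod, mem_Icc] at hbox ⊢
  obtain ⟨⟨hx1, hx2⟩, ⟨hy1, hy2⟩, hz1, hz2⟩ := hbox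
  exact ⟨⟨by linarith, by linarith⟩, ⟨by linarith, by linarith⟩, by linarith, by linarith⟩
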